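/- Let R be a discrete valuation ring. Then every subset I ⊆ R with 0 ∈ I that is closed under multiplication by elements of R (x·r ∈ I for all x ∈ I, r ∈ R) is also closed under addition, and hence is an ideal of R. Consequently, the ideals of R coincide with the ideals of the underlying multiplicative monoid R•. -/

import Mathlib

/-- In a discrete valuation ring `R`, every ideal of the underlying
multiplicative monoid `R•` (a subset `I` with `0 ∈ I` and `I·R ⊆ I`) is
automatically closed under addition, and hence is an ideal of the ring `R`. -/
theorem monoid_ideal_of_dvr_is_ideal
    {R : Type*} [CommRing R] [IsDomain R] [IsDiscreteValuationRing R]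
    (I : Set R) (h0 : (0 : R) ∈ I) (hmul : ∀ x ∈ I, ∀ r : R, x * r ∈ I) :
    (∀ a ∈ I, ∀ b ∈ I, a + b ∈ I) ∧ ∃ J : Ideal R, (J : Set R) = I := by
  have hadd : ∀ a ∈ I, ∀ b ∈ I, a + b ∈ I := by
    intro a ha b hb
    obtain ⟨c, hc | hc⟩ := ValuationRing.cond a b
    · have : a + b = a * (1 + c) := by rw [mul_add, mul_one, hc]
      rw [this]; exact hmul a ha _
    · have : a + b = b * (c + 1) := by rw [mul_add, mul_one, hc, add_comm]
      rw [this]; exact hmul b hb _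
  exact ⟨hadd, ⟨{ carrier := I
                  add_mem' := fun {x y} hx hy => hadd x hx y hy
                  zero_mem' := h0
                  smul_mem' := fun r x hx => by
                    simpa [smul_eq_mul, mul_comm] using hmul x hx r }, rfl⟩⟩
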